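/- Let ε ∈ [0,1] and define the map T_B(r,s) := (r + (ε/4) r' ∂^{-1}(s) + (ε/4) rs + (ε/8) s², s + (ε/4) s' ∂^{-1}(r) + (ε/4) rs + (ε/8) r²). For real-valued r, s ∈ W^{2,1}(ℝ), write (r₁, s₁) := T_B(r, s) and set H_BW(r₁,s₁) := ∫_ℝ (r₁² + s₁²) dx + (ε/2)∫_ℝ (r₁³ + s₁³) dx − (ε/2)∫_ℝ (r₁² s₁ + r₁ s₁²) dx, L(r,s) := ∫_ℝ (r² + s²) dx, Z(r,s) := (1/2)∫_ℝ (r³ + s³) dx. Then |H_BW(T_B(r,s)) − L(r,s) − εZ(r,s)| ≤ ε² C(‖r‖_{W^{2,1}}, ‖s‖_{W^{2,1}}), where C is a nondecreasing function of its arguments independent of ε. -/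

import Mathlib

open MeasureTheory Real
open scoped ENNReal

/-- Fourier transform of a real-valued function on ℝ (as a complex-valued function). -/
noncomputable def fourierC (u : ℝ → ℝ) : ℝ → ℂ :=
  FourierTransform.fourier (fun x => (u x : ℂ))

/-- Fourier multiplier with (real) symbol `G`, acting on real-valued functions. -/
noncomputable def fourierMul (G : ℝ → ℝ) (u : ℝ → ℝ) : ℝ → ℝ :=
  fun x => (FourierTransformInv.fourierInv (fun ξ => (G ξ : ℂ) * fourierC u ξ) x).re

/-- The `H^α(ℝ)` Sobolev norm, `‖(1+ξ²)^{α/2} û‖_{L²}`. -/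
noncomputable def HNorm (α : ℝ) (u : ℝ → ℝ) : ℝ≥0∞ :=
  eLpNorm (fun ξ : ℝ => (1 + ξ ^ 2) ^ (α / 2) * ‖fourierC u ξ‖) 2 volume

/-- The symbol `F_μ(ξ) = sqrt(tanh(√μ|ξ|)/(√μ|ξ|))`. -/
noncomputable def Fsymb (μ : ℝ) (ξ : ℝ) : ℝ :=
  if μ = 0 ∨ ξ = 0 then 1 else Real.sqrt (Real.tanh (Real.sqrt μ * |ξ|) / (Real.sqrt μ * |ξ|))

/-- The symbol of `F_μ⁻¹`. -/
noncomputable def FsymbInv (μ : ℝ) (ξ : ℝ) : ℝ :=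
  if μ = 0 ∨ ξ = 0 then 1 else Real.sqrt ((Real.sqrt μ * |ξ|) / Real.tanh (Real.sqrt μ * |ξ|))

/-- Time derivative of a time-dependent function. -/
noncomputable def tderiv (u : ℝ → ℝ → ℝ) (t x : ℝ) : ℝ :=
  deriv (fun τ => u τ x) t

/-- The `W^{α,1}(ℝ)` norm for integer `α`. -/
noncomputable def WNorm (α : ℕ) (u : ℝ → ℝ) : ℝ≥0∞ :=
  ∑ k ∈ Finset.range (α + 1), eLpNorm (iteratedDeriv k u) 1 volume

/-- Membership in `W^{α,1}(ℝ)` (with a smooth-representative convention). -/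
def MemW (α : ℕ) (u : ℝ → ℝ) : Prop :=
  ContDiff ℝ (α : ℕ∞) u ∧ ∀ k ≤ α, MeasureTheory.Integrable (iteratedDeriv k u)

/-- The antiderivative operator `∂⁻¹u(x) = (1/2)∫ sgn(x−y)u(y)dy`. -/
noncomputable def pinv (u : ℝ → ℝ) : ℝ → ℝ :=
  fun x => (1 / 2) * ∫ y, Real.sign (x - y) * u y

/-- First component of the Birkhoff transformation `T_B`. -/
noncomputable def TB1 (ε : ℝ) (r s : ℝ → ℝ) : ℝ → ℝ :=
  fun x => r x + (ε / 4) * deriv r x * pinv s x + (ε / 4) * r x * s x + (ε / 8) * (s x) ^ 2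

/-- Second component of the Birkhoff transformation `T_B`. -/
noncomputable def TB2 (ε : ℝ) (r s : ℝ → ℝ) : ℝ → ℝ :=
  fun x => s x + (ε / 4) * deriv s x * pinv r x + (ε / 4) * r x * s x + (ε / 8) * (r x) ^ 2

/-- The Hamiltonian `H_BW`. -/
noncomputable def HBW (ε : ℝ) (r s : ℝ → ℝ) : ℝ :=
  (∫ x, ((r x) ^ 2 + (s x) ^ 2)) + (ε / 2) * (∫ x, ((r x) ^ 3 + (s x) ^ 3))
    - (ε / 2) * (∫ x, ((r x) ^ 2 * s x + r x * (s x) ^ 2))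

namespace S14

open Filter Topology Set

/-- Bounded continuous integrable functions. -/
structure Nice (f : ℝ → ℝ) : Prop where
  cont : Continuous f
  intg : Integrable f
  bdd : ∃ c, ∀ x, |f x| ≤ c

theorem Nice.of_eq {f g : ℝ → ℝ} (hf : Nice f) (h : ∀ x, f x = g x) : Nice g := by
  have : f = g := funext h
  rwa [this] at hf

theorem Nice.add {f g : ℝ → ℝ} (hf : Nice f) (hg : Nice g) : Nice (fun x => f x + g x) := by
  obtain ⟨c, hc⟩ := hf.bdd; obtain ⟨d, hd⟩ := hg.bdd
  exact ⟨hf.cont.add hg.cont, hf.intg.add hg.intg,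
    ⟨c + d, fun x => (abs_add_le _ _).trans (add_le_add (hc x) (hd x))⟩⟩

theorem Nice.const_mul {f : ℝ → ℝ} (hf : Nice f) (c : ℝ) : Nice (fun x => c * f x) := by
  obtain ⟨d, hd⟩ := hf.bdd
  refine ⟨(continuous_const.mul hf.cont), hf.intg.const_mul c, ⟨|c| * d, fun x => ?_⟩⟩
  rw [abs_mul]
  exact mul_le_mul_of_nonneg_left (hd x) (abs_nonneg c)

theorem Nice.mul_bdd {f g : ℝ → ℝ} (hf : Nice f) (hg : Continuous g) (c : ℝ)
    (hc : ∀ x, |g x| ≤ c) : Nice (fun x => f x * g x) := by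
  obtain ⟨d, hd⟩ := hf.bdd
  refine ⟨hf.cont.mul hg, ?_, ⟨d * c, fun x => ?_⟩⟩
  · have h := hf.intg.bdd_mul hg.aestronglyMeasurable (c := c) (Eventually.of_forall fun x => by
      simpa [Real.norm_eq_abs] using hc x)
    simpa [mul_comm] using h
  · rw [abs_mul]
    exact mul_le_mul (hd x) (hc x) (abs_nonneg _) ((abs_nonneg _).trans (hd x))

theorem Nice.mul {f g : ℝ → ℝ} (hf : Nice f) (hg : Nice g) : Nice (fun x => f x * g x) := by
  obtain ⟨c, hc⟩ := hg.bdd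
  exact hf.mul_bdd hg.cont c hc

theorem Nice.sub {f g : ℝ → ℝ} (hf : Nice f) (hg : Nice g) : Nice (fun x => f x - g x) :=
  (hf.add (hg.const_mul (-1))).of_eq (fun x => by ring)

theorem mbound {p q P Q : ℝ} (hp : |p| ≤ P) (hq : |q| ≤ Q) : |p * q| ≤ P * Q := by
  rw [abs_mul]
  exact mul_le_mul hp hq (abs_nonneg _) ((abs_nonneg _).trans hp)

/-- The sup of `|f|` is controlled by the `L¹` norm of the derivative. -/
theorem abs_le_integral_deriv {f f' : ℝ → ℝ} (hder : ∀ x, HasDerivAt f (f' x) x)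
    (hf : Integrable f) (hf' : Integrable f') (x : ℝ) : |f x| ≤ ∫ y, |f' y| := by
  have hbot : Tendsto f atBot (𝓝 0) :=
    tendsto_zero_of_hasDerivAt_of_integrableOn_Iic (a := 0) (fun y _ => hder y)
      hf'.integrableOn hf.integrableOn
  have h1 : Tendsto (fun y => |f x - f y|) atBot (𝓝 |f x|) := by
    have := (tendsto_const_nhds (x := f x) (f := atBot)).sub hbot
    simpa using this.abs
  refine le_of_tendsto h1 ?_
  filter_upwards [eventually_le_atBot x] with y hy
  have hftc : ∫ t in y..x, f' t = f x - f y :=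
    intervalIntegral.integral_eq_sub_of_hasDerivAt (fun t _ => hder t)
      (hf'.intervalIntegrable)
  rw [← hftc]
  calc |∫ t in y..x, f' t| ≤ ∫ t in y..x, |f' t| :=
        intervalIntegral.abs_integral_le_integral_abs hy
    _ = ∫ t in Ioc y x, |f' t| := intervalIntegral.integral_of_le hy
    _ ≤ ∫ t, |f' t| := setIntegral_le_integral hf'.abs
        (Eventually.of_forall fun t => abs_nonneg _)

theorem measurable_rsign : Measurable Real.sign := by
  unfold Real.sign
  exact Measurable.ite (measurableSet_lt measurable_id' measurable_const) measurable_const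
    (Measurable.ite (measurableSet_lt measurable_const measurable_id') measurable_const
      measurable_const)

theorem abs_rsign_le (z : ℝ) : |Real.sign z| ≤ 1 := by
  rcases Real.sign_apply_eq z with h | h | h <;> rw [h] <;> norm_num

theorem pinv_integrand_integrable {u : ℝ → ℝ} (hu : Integrable u) (x : ℝ) :
    Integrable (fun y => Real.sign (x - y) * u y) := by
  refine hu.bdd_mul
    ((measurable_rsign.comp (measurable_const.sub measurable_id)).aestronglyMeasurable)
    (Eventually.of_forall fun y => by simpa [Real.norm_eq_abs] using abs_rsign_le (x - y))

theorem pinv_eq {u : ℝ → ℝ} (hu : Integrable u) (x : ℝ) :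
    pinv u x = (∫ y in Iic x, u y) - (1 / 2) * ∫ y, u y := by
  have hint := pinv_integrand_integrable hu x
  have hsplit : (∫ y in Iic x, Real.sign (x - y) * u y) + (∫ y in Ioi x, Real.sign (x - y) * u y)
      = ∫ y, Real.sign (x - y) * u y := by
    have := integral_add_compl (measurableSet_Iic (a := x)) hint
    rwa [compl_Iic] at this
  have h1 : (∫ y in Iic x, Real.sign (x - y) * u y) = ∫ y in Iic x, u y := by
    refine setIntegral_congr_ae measurableSet_Iic ?_
    have hne : ∀ᵐ (y : ℝ), y ≠ x := by
      refine ae_iff.mpr ?_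
      simp [Real.volume_singleton]
    filter_upwards [hne] with y hy hmem
    have : y < x := lt_of_le_of_ne hmem hy
    rw [Real.sign_of_pos (by linarith), one_mul]
  have h2 : (∫ y in Ioi x, Real.sign (x - y) * u y) = - ∫ y in Ioi x, u y := by
    rw [← integral_neg]
    refine setIntegral_congr_fun measurableSet_Ioi ?_
    intro y hy
    have : x < y := hy
    simp [Real.sign_of_neg (by linarith : x - y < 0)]
  have htot : (∫ y in Iic x, u y) + (∫ y in Ioi x, u y) = ∫ y, u y := by
    have := integral_add_compl (measurableSet_Iic (a := x)) hu
    rwa [compl_Iic] at this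
  unfold pinv
  rw [← hsplit, h1, h2]
  linarith

theorem pinv_hasDerivAt {u : ℝ → ℝ} (hc : Continuous u) (hu : Integrable u) (x : ℝ) :
    HasDerivAt (pinv u) (u x) x := by
  have hrepr : pinv u
      = fun x => (∫ t in (0:ℝ)..x, u t) + ((∫ y in Iic 0, u y) - (1 / 2) * ∫ y, u y) := by
    funext z
    rw [pinv_eq hu z, ← intervalIntegral.integral_Iic_sub_Iic hu.integrableOn hu.integrableOn]
    ring
  rw [hrepr]
  exact (intervalIntegral.integral_hasDerivAt_right hu.intervalIntegrable
    (hc.stronglyMeasurableAtFilter volume (𝓝 x)) hc.continuousAt).add_const _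

theorem pinv_bound {u : ℝ → ℝ} (hu : Integrable u) (x : ℝ) :
    |pinv u x| ≤ (1 / 2) * ∫ y, |u y| := by
  unfold pinv
  rw [abs_mul]
  have h1 : |(1:ℝ) / 2| = 1 / 2 := by norm_num
  rw [h1]
  refine mul_le_mul_of_nonneg_left ?_ (by norm_num)
  calc |∫ y, Real.sign (x - y) * u y| ≤ ∫ y, |Real.sign (x - y) * u y| := by
        have h := norm_integral_le_integral_norm (μ := volume) (fun y => Real.sign (x - y) * u y)
        simp only [Real.norm_eq_abs] at h
        exact h
    _ ≤ ∫ y, |u y| := by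
        refine integral_mono (pinv_integrand_integrable hu x).abs hu.abs fun y => ?_
        rw [abs_mul]
        calc |Real.sign (x - y)| * |u y| ≤ 1 * |u y| :=
              mul_le_mul_of_nonneg_right (abs_rsign_le _) (abs_nonneg _)
          _ = |u y| := one_mul _

theorem integral_abs_eq_toReal {f : ℝ → ℝ} (hf : Integrable f) :
    (eLpNorm f 1 volume).toReal = ∫ x, |f x| := by
  rw [eLpNorm_one_eq_lintegral_enorm, ← ofReal_integral_norm_eq_lintegral_enorm hf,
    ENNReal.toReal_ofReal (integral_nonneg fun x => norm_nonneg _)]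
  simp [Real.norm_eq_abs]

theorem memW2_int0 {r : ℝ → ℝ} (hr : MemW 2 r) : Integrable r := by
  have := hr.2 0 (by norm_num); rwa [iteratedDeriv_zero] at this

theorem memW2_int1 {r : ℝ → ℝ} (hr : MemW 2 r) : Integrable (deriv r) := by
  have := hr.2 1 (by norm_num); rwa [iteratedDeriv_one] at this

theorem memW2_int2 {r : ℝ → ℝ} (hr : MemW 2 r) : Integrable (deriv (deriv r)) := by
  have := hr.2 2 le_rfl
  rwa [iteratedDeriv_succ, iteratedDeriv_one] at this

theorem memW2_contDiff_deriv {r : ℝ → ℝ} (hr : MemW 2 r) : ContDiff ℝ 1 (deriv r) := by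
  have h : ContDiff ℝ (1 + 1 : WithTop ℕ∞) r := by
    have := hr.1
    norm_num at this ⊢
    exact_mod_cast this
  exact (contDiff_succ_iff_deriv.mp h).2.2

theorem memW2_diff {r : ℝ → ℝ} (hr : MemW 2 r) : Differentiable ℝ r :=
  hr.1.differentiable (by simp)

theorem memW2_diff1 {r : ℝ → ℝ} (hr : MemW 2 r) : Differentiable ℝ (deriv r) :=
  (memW2_contDiff_deriv hr).differentiable one_ne_zero

theorem WNorm_two_toReal {r : ℝ → ℝ} (hr : MemW 2 r) :
    (WNorm 2 r).toReal = (∫ x, |r x|) + (∫ x, |deriv r x|) + (∫ x, |deriv (deriv r) x|) := by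
  have h0 := memW2_int0 hr
  have h1 := memW2_int1 hr
  have h2 := memW2_int2 hr
  have e2 : iteratedDeriv 2 r = deriv (deriv r) := by rw [iteratedDeriv_succ, iteratedDeriv_one]
  have f0 : eLpNorm r 1 volume ≠ ⊤ := (memLp_one_iff_integrable.mpr h0).eLpNorm_ne_top
  have f1 : eLpNorm (deriv r) 1 volume ≠ ⊤ := (memLp_one_iff_integrable.mpr h1).eLpNorm_ne_top
  have f2 : eLpNorm (deriv (deriv r)) 1 volume ≠ ⊤ :=
    (memLp_one_iff_integrable.mpr h2).eLpNorm_ne_top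
  unfold WNorm
  rw [Finset.sum_range_succ, Finset.sum_range_succ, Finset.sum_range_one, iteratedDeriv_zero,
    iteratedDeriv_one, e2, ENNReal.toReal_add (ENNReal.add_ne_top.mpr ⟨f0, f1⟩) f2,
    ENNReal.toReal_add f0 f1, integral_abs_eq_toReal h0, integral_abs_eq_toReal h1,
    integral_abs_eq_toReal h2]

end S14

open S14 Filter Topology Set in
theorem statement14 :
    ∃ C : ℝ → ℝ → ℝ,
      (∀ a a' b b' : ℝ, a ≤ a' → b ≤ b' → C a b ≤ C a' b') ∧
      ∀ ε ∈ Set.Icc (0:ℝ) 1, ∀ r s : ℝ → ℝ, MemW 2 r → MemW 2 s →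
        |HBW ε (TB1 ε r s) (TB2 ε r s)
            - (∫ x, ((r x) ^ 2 + (s x) ^ 2))
            - ε * ((1 / 2) * ∫ x, ((r x) ^ 3 + (s x) ^ 3))|
          ≤ ε ^ 2 * C (WNorm 2 r).toReal (WNorm 2 s).toReal := by
  refine ⟨fun a b => 20 * (1 + max a 0 + max b 0) ^ 6, ?_, ?_⟩
  · intro a a' b b' ha hb
    have h1 : (0:ℝ) ≤ 1 + max a 0 + max b 0 := by positivity
    have h2 : 1 + max a 0 + max b 0 ≤ 1 + max a' 0 + max b' 0 := by
      have := max_le_max ha (le_refl (0:ℝ))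
      have := max_le_max hb (le_refl (0:ℝ))
      linarith
    have h3 := pow_le_pow_left₀ h1 h2 6
    show 20 * (1 + max a 0 + max b 0) ^ 6 ≤ 20 * (1 + max a' 0 + max b' 0) ^ 6
    linarith
  · intro ε hε r s hr hs
    obtain ⟨hε0, hε1⟩ := hε
    -- Basic regularity and integrability facts
    have hrc : Continuous r := (memW2_diff hr).continuous
    have hsc : Continuous s := (memW2_diff hs).continuous
    have hr'c : Continuous (deriv r) := (memW2_diff1 hr).continuous
    have hs'c : Continuous (deriv s) := (memW2_diff1 hs).continuous
    have hri : Integrable r := memW2_int0 hr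
    have hsi : Integrable s := memW2_int0 hs
    have hr'i : Integrable (deriv r) := memW2_int1 hr
    have hs'i : Integrable (deriv s) := memW2_int1 hs
    have hr''i : Integrable (deriv (deriv r)) := memW2_int2 hr
    have hs''i : Integrable (deriv (deriv s)) := memW2_int2 hs
    have hdr : ∀ x, HasDerivAt r (deriv r x) x := fun x => ((memW2_diff hr) x).hasDerivAt
    have hds : ∀ x, HasDerivAt s (deriv s x) x := fun x => ((memW2_diff hs) x).hasDerivAt
    have hdr' : ∀ x, HasDerivAt (deriv r) (deriv (deriv r) x) x :=
      fun x => ((memW2_diff1 hr) x).hasDerivAt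
    have hds' : ∀ x, HasDerivAt (deriv s) (deriv (deriv s) x) x :=
      fun x => ((memW2_diff1 hs) x).hasDerivAt
    -- Norms
    simp only []
    obtain ⟨a, ha_def⟩ : ∃ a', a' = (WNorm 2 r).toReal := ⟨_, rfl⟩
    obtain ⟨b, hb_def⟩ : ∃ b', b' = (WNorm 2 s).toReal := ⟨_, rfl⟩
    rw [← ha_def, ← hb_def]
    have hWr : a = (∫ x, |r x|) + (∫ x, |deriv r x|) + (∫ x, |deriv (deriv r) x|) := by
      rw [ha_def]; exact WNorm_two_toReal hr
    have hWs : b = (∫ x, |s x|) + (∫ x, |deriv s x|) + (∫ x, |deriv (deriv s) x|) := by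
      rw [hb_def]; exact WNorm_two_toReal hs
    have ha0 : 0 ≤ a := ha_def ▸ ENNReal.toReal_nonneg
    have hb0 : 0 ≤ b := hb_def ▸ ENNReal.toReal_nonneg
    obtain ⟨M, hM_def⟩ : ∃ M' : ℝ, M' = 1 + a + b := ⟨_, rfl⟩
    have hM1 : (1:ℝ) ≤ M := by rw [hM_def]; linarith
    have h0M : (0:ℝ) ≤ M := by linarith
    have c14 : |(1/4 : ℝ)| ≤ 1/4 := by rw [abs_of_nonneg] <;> norm_num
    have c18 : |(1/8 : ℝ)| ≤ 1/8 := by rw [abs_of_nonneg] <;> norm_num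
    have c12 : |(1/2 : ℝ)| ≤ 1/2 := by rw [abs_of_nonneg] <;> norm_num
    have c32 : |(3/2 : ℝ)| ≤ 3/2 := by rw [abs_of_nonneg] <;> norm_num
    have nnint : ∀ f : ℝ → ℝ, 0 ≤ ∫ x, |f x| := fun f => integral_nonneg fun x => abs_nonneg _
    -- sup bounds
    have hrM : ∀ x, |r x| ≤ M := fun x => by
      have h := abs_le_integral_deriv hdr hri hr'i x
      have := nnint r; have := nnint (deriv (deriv r)); linarith [h]
    have hsM : ∀ x, |s x| ≤ M := fun x => by
      have h := abs_le_integral_deriv hds hsi hs'i x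
      have := nnint s; have := nnint (deriv (deriv s)); linarith [h]
    have hr'M : ∀ x, |deriv r x| ≤ M := fun x => by
      have h := abs_le_integral_deriv hdr' hr'i hr''i x
      have := nnint r; have := nnint (deriv r); linarith [h]
    have hs'M : ∀ x, |deriv s x| ≤ M := fun x => by
      have h := abs_le_integral_deriv hds' hs'i hs''i x
      have := nnint s; have := nnint (deriv s); linarith [h]
    have hPs : ∀ x, |pinv s x| ≤ M := fun x => by
      have h := pinv_bound hsi x
      have := nnint (deriv s); have := nnint (deriv (deriv s)); linarith [h]
    have hPr : ∀ x, |pinv r x| ≤ M := fun x => by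
      have h := pinv_bound hri x
      have := nnint (deriv r); have := nnint (deriv (deriv r)); linarith [h]
    have hPsc : Continuous (pinv s) :=
      continuous_iff_continuousAt.mpr fun x => (pinv_hasDerivAt hsc hsi x).continuousAt
    have hPrc : Continuous (pinv r) :=
      continuous_iff_continuousAt.mpr fun x => (pinv_hasDerivAt hrc hri x).continuousAt
    -- the dominating integrable function u
    obtain ⟨u, hu_def⟩ : ∃ u' : ℝ → ℝ, u' = fun x => |r x| + |s x| + |deriv r x| + |deriv s x| :=
      ⟨_, rfl⟩
    have hu_int : Integrable u := by
      rw [hu_def]; exact ((hri.abs.add hsi.abs).add hr'i.abs).add hs'i.abs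
    have hu_nonneg : ∀ x, 0 ≤ u x := fun x => by
      simp only [hu_def]; positivity
    have hru : ∀ x, |r x| ≤ u x := fun x => by
      simp only [hu_def]
      have := abs_nonneg (s x); have := abs_nonneg (deriv r x); have := abs_nonneg (deriv s x)
      linarith
    have hsu : ∀ x, |s x| ≤ u x := fun x => by
      simp only [hu_def]
      have := abs_nonneg (r x); have := abs_nonneg (deriv r x); have := abs_nonneg (deriv s x)
      linarith
    have hr'u : ∀ x, |deriv r x| ≤ u x := fun x => by
      simp only [hu_def]
      have := abs_nonneg (r x); have := abs_nonneg (s x); have := abs_nonneg (deriv s x)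
      linarith
    have hs'u : ∀ x, |deriv s x| ≤ u x := fun x => by
      simp only [hu_def]
      have := abs_nonneg (r x); have := abs_nonneg (s x); have := abs_nonneg (deriv r x)
      linarith
    have hu_le : ∫ x, u x ≤ M := by
      have i0r : Integrable (fun x => |r x|) := hri.abs
      have i0s : Integrable (fun x => |s x|) := hsi.abs
      have i1r : Integrable (fun x => |deriv r x|) := hr'i.abs
      have i1s : Integrable (fun x => |deriv s x|) := hs'i.abs
      have j1 : Integrable (fun x => |r x| + |s x|) := i0r.add i0s
      have j2 : Integrable (fun x => |r x| + |s x| + |deriv r x|) := j1.add i1r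
      have e : ∫ x, u x = (((∫ x, |r x|) + ∫ x, |s x|) + ∫ x, |deriv r x|) + ∫ x, |deriv s x| := by
        simp only [hu_def]
        rw [integral_add j2 i1s, integral_add j1 i1r, integral_add i0r i0s]
      rw [e]
      have := nnint (deriv (deriv r)); have := nnint (deriv (deriv s))
      linarith
    -- A and B
    obtain ⟨A, hA_def⟩ : ∃ A' : ℝ → ℝ, A' = fun x =>
      (1/4) * (deriv r x * pinv s x) + ((1/4) * (r x * s x) + (1/8) * (s x * s x)) := ⟨_, rfl⟩
    obtain ⟨B, hB_def⟩ : ∃ B' : ℝ → ℝ, B' = fun x =>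
      (1/4) * (deriv s x * pinv r x) + ((1/4) * (r x * s x) + (1/8) * (r x * r x)) := ⟨_, rfl⟩
    have nr : Nice r := ⟨hrc, hri, ⟨M, hrM⟩⟩
    have ns : Nice s := ⟨hsc, hsi, ⟨M, hsM⟩⟩
    have nr' : Nice (deriv r) := ⟨hr'c, hr'i, ⟨M, hr'M⟩⟩
    have ns' : Nice (deriv s) := ⟨hs'c, hs'i, ⟨M, hs'M⟩⟩
    have nA : Nice A := by
      rw [hA_def]
      exact ((nr'.mul_bdd hPsc M hPs).const_mul (1/4)).add
        (((nr.mul ns).const_mul (1/4)).add ((ns.mul ns).const_mul (1/8)))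
    have nB : Nice B := by
      rw [hB_def]
      exact ((ns'.mul_bdd hPrc M hPr).const_mul (1/4)).add
        (((nr.mul ns).const_mul (1/4)).add ((nr.mul nr).const_mul (1/8)))
    have hAM : ∀ x, |A x| ≤ M^2 := by
      intro x
      have h1 : |(1/4) * (deriv r x * pinv s x)| ≤ (1/4) * (M * M) :=
        mbound c14 (mbound (hr'M x) (hPs x))
      have h2 : |(1/4) * (r x * s x)| ≤ (1/4) * (M * M) :=
        mbound c14 (mbound (hrM x) (hsM x))
      have h3 : |(1/8) * (s x * s x)| ≤ (1/8) * (M * M) :=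
        mbound c18 (mbound (hsM x) (hsM x))
      have tri : |A x| ≤ |(1/4) * (deriv r x * pinv s x)|
          + (|(1/4) * (r x * s x)| + |(1/8) * (s x * s x)|) := by
        simp only [hA_def]
        exact (abs_add_le _ _).trans (add_le_add_right (abs_add_le _ _) _)
      linarith only [tri, h1, h2, h3, mul_self_nonneg M, mul_nonneg (hu_nonneg x) h0M]
    have hBM : ∀ x, |B x| ≤ M^2 := by
      intro x
      have h1 : |(1/4) * (deriv s x * pinv r x)| ≤ (1/4) * (M * M) :=
        mbound c14 (mbound (hs'M x) (hPr x))
      have h2 : |(1/4) * (r x * s x)| ≤ (1/4) * (M * M) :=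
        mbound c14 (mbound (hrM x) (hsM x))
      have h3 : |(1/8) * (r x * r x)| ≤ (1/8) * (M * M) :=
        mbound c18 (mbound (hrM x) (hrM x))
      have tri : |B x| ≤ |(1/4) * (deriv s x * pinv r x)|
          + (|(1/4) * (r x * s x)| + |(1/8) * (r x * r x)|) := by
        simp only [hB_def]
        exact (abs_add_le _ _).trans (add_le_add_right (abs_add_le _ _) _)
      linarith only [tri, h1, h2, h3, mul_self_nonneg M, mul_nonneg (hu_nonneg x) h0M]
    have hAu : ∀ x, |A x| ≤ M * u x := by
      intro x
      have h1 : |(1/4) * (deriv r x * pinv s x)| ≤ (1/4) * (u x * M) :=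
        mbound c14 (mbound (hr'u x) (hPs x))
      have h2 : |(1/4) * (r x * s x)| ≤ (1/4) * (u x * M) :=
        mbound c14 (mbound (hru x) (hsM x))
      have h3 : |(1/8) * (s x * s x)| ≤ (1/8) * (u x * M) :=
        mbound c18 (mbound (hsu x) (hsM x))
      have tri : |A x| ≤ |(1/4) * (deriv r x * pinv s x)|
          + (|(1/4) * (r x * s x)| + |(1/8) * (s x * s x)|) := by
        simp only [hA_def]
        exact (abs_add_le _ _).trans (add_le_add_right (abs_add_le _ _) _)
      linarith only [tri, h1, h2, h3, mul_self_nonneg M, mul_nonneg (hu_nonneg x) h0M]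
    have hBu : ∀ x, |B x| ≤ M * u x := by
      intro x
      have h1 : |(1/4) * (deriv s x * pinv r x)| ≤ (1/4) * (u x * M) :=
        mbound c14 (mbound (hs'u x) (hPr x))
      have h2 : |(1/4) * (r x * s x)| ≤ (1/4) * (u x * M) :=
        mbound c14 (mbound (hru x) (hsM x))
      have h3 : |(1/8) * (r x * r x)| ≤ (1/8) * (u x * M) :=
        mbound c18 (mbound (hru x) (hrM x))
      have tri : |B x| ≤ |(1/4) * (deriv s x * pinv r x)|
          + (|(1/4) * (r x * s x)| + |(1/8) * (r x * r x)|) := by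
        simp only [hB_def]
        exact (abs_add_le _ _).trans (add_le_add_right (abs_add_le _ _) _)
      linarith only [tri, h1, h2, h3, mul_self_nonneg M, mul_nonneg (hu_nonneg x) h0M]
    -- The first-order term G and its antiderivative
    obtain ⟨G, hG_def⟩ : ∃ G' : ℝ → ℝ, G' = fun x =>
      2 * (r x * A x + s x * B x) - (1/2) * (r x * r x * s x + r x * (s x * s x)) := ⟨_, rfl⟩
    have nG : Nice G :=
      ((((nr.mul nA).add (ns.mul nB)).const_mul 2).add
        ((((nr.mul nr).mul ns).add (nr.mul (ns.mul ns))).const_mul (-(1/2)))).of_eq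
        (fun x => by simp only [hG_def]; ring)
    obtain ⟨Anti, hAnti_def⟩ : ∃ A' : ℝ → ℝ, A' = fun x =>
      (1/4) * (r x * r x * pinv s x + s x * s x * pinv r x) := ⟨_, rfl⟩
    have nAnti : Nice Anti := by
      rw [hAnti_def]
      exact ((((nr.mul nr).mul_bdd hPsc M hPs).add
        (((ns.mul ns)).mul_bdd hPrc M hPr)).const_mul (1/4))
    have hdAnti : ∀ x, HasDerivAt Anti (G x) x := by
      intro x
      have h1 : HasDerivAt (fun y => r y * r y * pinv s y)
          ((deriv r x * r x + r x * deriv r x) * pinv s x + r x * r x * s x) x :=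
        ((hdr x).mul (hdr x)).mul (pinv_hasDerivAt hsc hsi x)
      have h2 : HasDerivAt (fun y => s y * s y * pinv r y)
          ((deriv s x * s x + s x * deriv s x) * pinv r x + s x * s x * r x) x :=
        ((hds x).mul (hds x)).mul (pinv_hasDerivAt hrc hri x)
      have h3 := (h1.add h2).const_mul (1/4)
      rw [hAnti_def]
      refine h3.congr_deriv ?_
      simp only [hG_def, hA_def, hB_def]
      ring
    have hG0 : ∫ x, G x = 0 :=
      integral_eq_zero_of_hasDerivAt_of_integrable hdAnti nG.intg nAnti.intg
    -- The second-order remainder R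
    obtain ⟨R, hR_def⟩ : ∃ R' : ℝ → ℝ, R' = fun x =>
      (A x * A x + B x * B x) + (3/2) * (r x * r x * A x + s x * s x * B x)
      - (r x * (s x * A x) + (1/2) * (r x * (r x * B x)) + (1/2) * (s x * (s x * A x))
          + r x * (s x * B x))
      + ε * ((3/2) * (r x * (A x * A x) + s x * (B x * B x))
          - ((1/2) * (A x * (A x * s x)) + r x * (A x * B x) + A x * (s x * B x)
            + (1/2) * (r x * (B x * B x))))
      + (ε * ε) * ((1/2) * (A x * (A x * A x) + B x * (B x * B x))
          - (1/2) * (A x * (A x * B x) + A x * (B x * B x))) := ⟨_, rfl⟩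
    have g1 : Nice (fun x => A x * A x + B x * B x) := (nA.mul nA).add (nB.mul nB)
    have g2 : Nice (fun x => r x * r x * A x + s x * s x * B x) :=
      (((nr.mul nr)).mul nA).add (((ns.mul ns)).mul nB)
    have g3 : Nice (fun x => r x * (s x * A x) + (1/2) * (r x * (r x * B x))
        + (1/2) * (s x * (s x * A x)) + r x * (s x * B x)) :=
      (((nr.mul (ns.mul nA)).add ((nr.mul (nr.mul nB)).const_mul (1/2))).add
        ((ns.mul (ns.mul nA)).const_mul (1/2))).add (nr.mul (ns.mul nB))
    have g4 : Nice (fun x => (3/2) * (r x * (A x * A x) + s x * (B x * B x))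
        - ((1/2) * (A x * (A x * s x)) + r x * (A x * B x) + A x * (s x * B x)
          + (1/2) * (r x * (B x * B x)))) :=
      (((nr.mul (nA.mul nA)).add (ns.mul (nB.mul nB))).const_mul (3/2)).sub
        (((((nA.mul (nA.mul ns)).const_mul (1/2)).add (nr.mul (nA.mul nB))).add
          (nA.mul (ns.mul nB))).add ((nr.mul (nB.mul nB)).const_mul (1/2)))
    have g5 : Nice (fun x => (1/2) * (A x * (A x * A x) + B x * (B x * B x))
        - (1/2) * (A x * (A x * B x) + A x * (B x * B x))) :=
      ((((nA.mul (nA.mul nA)).add (nB.mul (nB.mul nB))).const_mul (1/2)).sub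
        ((((nA.mul (nA.mul nB))).add (nA.mul (nB.mul nB))).const_mul (1/2))).of_eq
          (fun x => by ring)
    have nR : Nice R :=
      (((((g1.add (g2.const_mul (3/2))).add (g3.const_mul (-1))).add
        (g4.const_mul ε)).add (g5.const_mul (ε * ε)))).of_eq
        (fun x => by simp only [hR_def]; ring)
    -- pointwise bound on R
    have hM2 : (1:ℝ) ≤ M^2 :=
      hM1.trans (by rw [pow_two]; exact le_mul_of_one_le_left h0M hM1)
    have hM35 : M^3 ≤ M^5 := by
      calc M^3 = M^3 * 1 := (mul_one _).symm
        _ ≤ M^3 * M^2 := mul_le_mul_of_nonneg_left hM2 (pow_nonneg h0M 3)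
        _ = M^5 := by ring
    have hM45 : M^4 ≤ M^5 := by
      calc M^4 = M^4 * 1 := (mul_one _).symm
        _ ≤ M^4 * M := mul_le_mul_of_nonneg_left hM1 (pow_nonneg h0M 4)
        _ = M^5 := by ring
    have habsR : ∀ x, |R x| ≤ 16 * (M^5 * u x) := by
      intro x
      have h0u : 0 ≤ u x := hu_nonneg x
      have b1 : |A x * A x + B x * B x| ≤ 2 * (M^3 * u x) := by
        have hA2 : |A x * A x| ≤ M^2 * (M * u x) := mbound (hAM x) (hAu x)
        have hB2 : |B x * B x| ≤ M^2 * (M * u x) := mbound (hBM x) (hBu x)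
        have := abs_add_le (A x * A x) (B x * B x)
        linarith only [this, hA2, hB2]
      have b2 : |r x * r x * A x + s x * s x * B x| ≤ 2 * (M^3 * u x) := by
        have hA2 : |r x * r x * A x| ≤ M * u x * M^2 := mbound (mbound (hrM x) (hru x)) (hAM x)
        have hB2 : |s x * s x * B x| ≤ M * u x * M^2 := mbound (mbound (hsM x) (hsu x)) (hBM x)
        have := abs_add_le (r x * r x * A x) (s x * s x * B x)
        linarith only [this, hA2, hB2]
      have b3 : |r x * (s x * A x) + (1/2) * (r x * (r x * B x))
          + (1/2) * (s x * (s x * A x)) + r x * (s x * B x)| ≤ 3 * (M^3 * u x) := by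
        have t1 : |r x * (s x * A x)| ≤ M * (u x * M^2) := mbound (hrM x) (mbound (hsu x) (hAM x))
        have t2 : |(1/2) * (r x * (r x * B x))| ≤ (1/2) * (M * (u x * M^2)) :=
          mbound c12 (mbound (hrM x) (mbound (hru x) (hBM x)))
        have t3 : |(1/2) * (s x * (s x * A x))| ≤ (1/2) * (M * (u x * M^2)) :=
          mbound c12 (mbound (hsM x) (mbound (hsu x) (hAM x)))
        have t4 : |r x * (s x * B x)| ≤ M * (u x * M^2) := mbound (hrM x) (mbound (hsu x) (hBM x))
        have tri1 := abs_add_le (r x * (s x * A x) + (1/2) * (r x * (r x * B x))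
          + (1/2) * (s x * (s x * A x))) (r x * (s x * B x))
        have tri2 := abs_add_le (r x * (s x * A x) + (1/2) * (r x * (r x * B x)))
          ((1/2) * (s x * (s x * A x)))
        have tri3 := abs_add_le (r x * (s x * A x)) ((1/2) * (r x * (r x * B x)))
        linarith only [tri1, tri2, tri3, t1, t2, t3, t4]
      have b4 : |(3/2) * (r x * (A x * A x) + s x * (B x * B x))
          - ((1/2) * (A x * (A x * s x)) + r x * (A x * B x) + A x * (s x * B x)
            + (1/2) * (r x * (B x * B x)))| ≤ 6 * (M^4 * u x) := by
        have t1 : |(3/2) * (r x * (A x * A x) + s x * (B x * B x))| ≤ (3/2) * (2 * (M^4 * u x)) := by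
          have p1 : |r x * (A x * A x)| ≤ M * (M^2 * (M * u x)) :=
            mbound (hrM x) (mbound (hAM x) (hAu x))
          have p2 : |s x * (B x * B x)| ≤ M * (M^2 * (M * u x)) :=
            mbound (hsM x) (mbound (hBM x) (hBu x))
          have tri := abs_add_le (r x * (A x * A x)) (s x * (B x * B x))
          have := mbound (p := (3/2 : ℝ)) (q := r x * (A x * A x) + s x * (B x * B x))
            c32 (tri.trans (add_le_add p1 p2))
          linarith only [this]
        have t2 : |(1/2) * (A x * (A x * s x)) + r x * (A x * B x) + A x * (s x * B x)
            + (1/2) * (r x * (B x * B x))| ≤ 3 * (M^4 * u x) := by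
          have p1 : |(1/2) * (A x * (A x * s x))| ≤ (1/2) * (M^2 * (M^2 * u x)) :=
            mbound c12 (mbound (hAM x) (mbound (hAM x) (hsu x)))
          have p2 : |r x * (A x * B x)| ≤ M * (M^2 * (M * u x)) :=
            mbound (hrM x) (mbound (hAM x) (hBu x))
          have p3 : |A x * (s x * B x)| ≤ M^2 * (M * (M * u x)) :=
            mbound (hAM x) (mbound (hsM x) (hBu x))
          have p4 : |(1/2) * (r x * (B x * B x))| ≤ (1/2) * (M * (M^2 * (M * u x))) :=
            mbound c12 (mbound (hrM x) (mbound (hBM x) (hBu x)))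
          have tri1 := abs_add_le ((1/2) * (A x * (A x * s x)) + r x * (A x * B x)
            + A x * (s x * B x)) ((1/2) * (r x * (B x * B x)))
          have tri2 := abs_add_le ((1/2) * (A x * (A x * s x)) + r x * (A x * B x))
            (A x * (s x * B x))
          have tri3 := abs_add_le ((1/2) * (A x * (A x * s x))) (r x * (A x * B x))
          linarith only [tri1, tri2, tri3, p1, p2, p3, p4]
        have tri := abs_sub ((3/2) * (r x * (A x * A x) + s x * (B x * B x)))
          ((1/2) * (A x * (A x * s x)) + r x * (A x * B x) + A x * (s x * B x)
            + (1/2) * (r x * (B x * B x)))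
        linarith only [tri, t1, t2]
      have b5 : |(1/2) * (A x * (A x * A x) + B x * (B x * B x))
          - (1/2) * (A x * (A x * B x) + A x * (B x * B x))| ≤ 2 * (M^5 * u x) := by
        have p1 : |A x * (A x * A x)| ≤ M^2 * (M^2 * (M * u x)) :=
          mbound (hAM x) (mbound (hAM x) (hAu x))
        have p2 : |B x * (B x * B x)| ≤ M^2 * (M^2 * (M * u x)) :=
          mbound (hBM x) (mbound (hBM x) (hBu x))
        have p3 : |A x * (A x * B x)| ≤ M^2 * (M^2 * (M * u x)) :=
          mbound (hAM x) (mbound (hAM x) (hBu x))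
        have p4 : |A x * (B x * B x)| ≤ M^2 * (M^2 * (M * u x)) :=
          mbound (hAM x) (mbound (hBM x) (hBu x))
        have tri := abs_sub ((1/2) * (A x * (A x * A x) + B x * (B x * B x)))
          ((1/2) * (A x * (A x * B x) + A x * (B x * B x)))
        have q1 : |(1/2) * (A x * (A x * A x) + B x * (B x * B x))| ≤ (1/2) * (2 * (M^5 * u x)) := by
          have tri2 := abs_add_le (A x * (A x * A x)) (B x * (B x * B x))
          have := mbound (p := (1/2 : ℝ)) (q := A x * (A x * A x) + B x * (B x * B x))
            c12 (tri2.trans (add_le_add p1 p2))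
          linarith only [this]
        have q2 : |(1/2) * (A x * (A x * B x) + A x * (B x * B x))| ≤ (1/2) * (2 * (M^5 * u x)) := by
          have tri2 := abs_add_le (A x * (A x * B x)) (A x * (B x * B x))
          have := mbound (p := (1/2 : ℝ)) (q := A x * (A x * B x) + A x * (B x * B x))
            c12 (tri2.trans (add_le_add p3 p4))
          linarith only [this]
        linarith only [tri, q1, q2]
      -- assemble
      have tri1 := abs_add_le ((A x * A x + B x * B x)
        + (3/2) * (r x * r x * A x + s x * s x * B x)
        - (r x * (s x * A x) + (1/2) * (r x * (r x * B x)) + (1/2) * (s x * (s x * A x))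
          + r x * (s x * B x))
        + ε * ((3/2) * (r x * (A x * A x) + s x * (B x * B x))
          - ((1/2) * (A x * (A x * s x)) + r x * (A x * B x) + A x * (s x * B x)
            + (1/2) * (r x * (B x * B x)))))
        ((ε * ε) * ((1/2) * (A x * (A x * A x) + B x * (B x * B x))
          - (1/2) * (A x * (A x * B x) + A x * (B x * B x))))
      have tri2 := abs_add_le ((A x * A x + B x * B x)
        + (3/2) * (r x * r x * A x + s x * s x * B x)
        - (r x * (s x * A x) + (1/2) * (r x * (r x * B x)) + (1/2) * (s x * (s x * A x))
          + r x * (s x * B x)))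
        (ε * ((3/2) * (r x * (A x * A x) + s x * (B x * B x))
          - ((1/2) * (A x * (A x * s x)) + r x * (A x * B x) + A x * (s x * B x)
            + (1/2) * (r x * (B x * B x)))))
      have tri3 := abs_sub ((A x * A x + B x * B x)
        + (3/2) * (r x * r x * A x + s x * s x * B x))
        (r x * (s x * A x) + (1/2) * (r x * (r x * B x)) + (1/2) * (s x * (s x * A x))
          + r x * (s x * B x))
      have tri4 := abs_add_le (A x * A x + B x * B x)
        ((3/2) * (r x * r x * A x + s x * s x * B x))
      have e4 : |ε * ((3/2) * (r x * (A x * A x) + s x * (B x * B x))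
          - ((1/2) * (A x * (A x * s x)) + r x * (A x * B x) + A x * (s x * B x)
            + (1/2) * (r x * (B x * B x))))| ≤ 6 * (M^4 * u x) := by
        have := mbound (p := ε) (by rwa [abs_of_nonneg hε0] : |ε| ≤ 1) b4
        linarith only [this]
      have e5 : |(ε * ε) * ((1/2) * (A x * (A x * A x) + B x * (B x * B x))
          - (1/2) * (A x * (A x * B x) + A x * (B x * B x)))| ≤ 2 * (M^5 * u x) := by
        have hee : |ε * ε| ≤ 1 := by
          rw [abs_mul, abs_of_nonneg hε0]; exact mul_le_one₀ hε1 hε0 hε1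
        have := mbound hee b5
        linarith only [this]
      have e2 : |(3/2) * (r x * r x * A x + s x * s x * B x)| ≤ 3 * (M^3 * u x) := by
        have := mbound (p := (3/2 : ℝ)) (q := r x * r x * A x + s x * s x * B x)
          c32 b2
        linarith only [this]
      have hfin1 : M^3 * u x ≤ M^5 * u x := mul_le_mul_of_nonneg_right hM35 h0u
      have hfin2 : M^4 * u x ≤ M^5 * u x := mul_le_mul_of_nonneg_right hM45 h0u
      calc |R x| = _ := by rw [hR_def]
        _ ≤ 16 * (M^5 * u x) := by linarith only [tri1, tri2, tri3, tri4, b1, b3, e2, e4, e5,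
              hfin1, hfin2]
    -- rewrite the transformation
    have hTB1 : TB1 ε r s = fun x => r x + ε * A x := by
      funext x; simp only [TB1, hA_def]; ring
    have hTB2 : TB2 ε r s = fun x => s x + ε * B x := by
      funext x; simp only [TB2, hB_def]; ring
    rw [hTB1, hTB2]
    obtain ⟨r1, hr1_def⟩ : ∃ f : ℝ → ℝ, f = fun x => r x + ε * A x := ⟨_, rfl⟩
    obtain ⟨s1, hs1_def⟩ : ∃ f : ℝ → ℝ, f = fun x => s x + ε * B x := ⟨_, rfl⟩
    rw [← hr1_def, ← hs1_def]
    have nr1 : Nice r1 := by rw [hr1_def]; exact nr.add (nA.const_mul ε)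
    have ns1 : Nice s1 := by rw [hs1_def]; exact ns.add (nB.const_mul ε)
    -- integrands
    have nf1 : Nice (fun x => (r1 x) ^ 2 + (s1 x) ^ 2) :=
      ((nr1.mul nr1).add (ns1.mul ns1)).of_eq (fun x => by ring)
    have nf2 : Nice (fun x => (r1 x) ^ 3 + (s1 x) ^ 3) :=
      ((nr1.mul (nr1.mul nr1)).add (ns1.mul (ns1.mul ns1))).of_eq (fun x => by ring)
    have nf3 : Nice (fun x => (r1 x) ^ 2 * s1 x + r1 x * (s1 x) ^ 2) :=
      (((nr1.mul nr1).mul ns1).add (nr1.mul (ns1.mul ns1))).of_eq (fun x => by ring)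
    have ng1 : Nice (fun x => (r x) ^ 2 + (s x) ^ 2) :=
      ((nr.mul nr).add (ns.mul ns)).of_eq (fun x => by ring)
    have ng2 : Nice (fun x => (r x) ^ 3 + (s x) ^ 3) :=
      ((nr.mul (nr.mul nr)).add (ns.mul (ns.mul ns))).of_eq (fun x => by ring)
    have nPhi : Nice (fun x => ((r1 x) ^ 2 + (s1 x) ^ 2)
        + (ε/2) * ((r1 x) ^ 3 + (s1 x) ^ 3)
        - (ε/2) * ((r1 x) ^ 2 * s1 x + r1 x * (s1 x) ^ 2)) :=
      (nf1.add (nf2.const_mul (ε/2))).sub (nf3.const_mul (ε/2))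
    have nPsi : Nice (fun x => ((r x) ^ 2 + (s x) ^ 2) + (ε/2) * ((r x) ^ 3 + (s x) ^ 3)) :=
      ng1.add (ng2.const_mul (ε/2))
    have if1 : Integrable (fun x => (r1 x) ^ 2 + (s1 x) ^ 2) := nf1.intg
    have if2 : Integrable (fun x => (ε/2) * ((r1 x) ^ 3 + (s1 x) ^ 3)) :=
      nf2.intg.const_mul (ε/2)
    have if3 : Integrable (fun x => (ε/2) * ((r1 x) ^ 2 * s1 x + r1 x * (s1 x) ^ 2)) :=
      nf3.intg.const_mul (ε/2)
    have if12 : Integrable (fun x => ((r1 x) ^ 2 + (s1 x) ^ 2)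
        + (ε/2) * ((r1 x) ^ 3 + (s1 x) ^ 3)) := if1.add if2
    have hPhi : HBW ε r1 s1 = ∫ x, (((r1 x) ^ 2 + (s1 x) ^ 2)
        + (ε/2) * ((r1 x) ^ 3 + (s1 x) ^ 3)
        - (ε/2) * ((r1 x) ^ 2 * s1 x + r1 x * (s1 x) ^ 2)) := by
      unfold HBW
      rw [integral_sub if12 if3, integral_add if1 if2, integral_const_mul, integral_const_mul]
    have ig1 : Integrable (fun x => (r x) ^ 2 + (s x) ^ 2) := ng1.intg
    have ig2 : Integrable (fun x => (ε/2) * ((r x) ^ 3 + (s x) ^ 3)) :=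
      ng2.intg.const_mul (ε/2)
    have hPsi : (∫ x, ((r x) ^ 2 + (s x) ^ 2)) + ε * ((1 / 2) * ∫ x, ((r x) ^ 3 + (s x) ^ 3))
        = ∫ x, (((r x) ^ 2 + (s x) ^ 2) + (ε/2) * ((r x) ^ 3 + (s x) ^ 3)) := by
      rw [integral_add ig1 ig2, integral_const_mul]
      ring
    have hpoint : (fun x => ((((r1 x) ^ 2 + (s1 x) ^ 2)
        + (ε/2) * ((r1 x) ^ 3 + (s1 x) ^ 3)
        - (ε/2) * ((r1 x) ^ 2 * s1 x + r1 x * (s1 x) ^ 2))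
        - (((r x) ^ 2 + (s x) ^ 2) + (ε/2) * ((r x) ^ 3 + (s x) ^ 3))))
        = fun x => ε * G x + ε ^ 2 * R x := by
      funext x
      simp only [hr1_def, hs1_def, hG_def, hR_def]
      ring
    have key : HBW ε r1 s1 - (∫ x, ((r x) ^ 2 + (s x) ^ 2))
        - ε * ((1 / 2) * ∫ x, ((r x) ^ 3 + (s x) ^ 3)) = ε ^ 2 * ∫ x, R x := by
      have iPhi : Integrable (fun x => ((r1 x) ^ 2 + (s1 x) ^ 2)
          + (ε/2) * ((r1 x) ^ 3 + (s1 x) ^ 3)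
          - (ε/2) * ((r1 x) ^ 2 * s1 x + r1 x * (s1 x) ^ 2)) := nPhi.intg
      have iPsi : Integrable (fun x => ((r x) ^ 2 + (s x) ^ 2)
          + (ε/2) * ((r x) ^ 3 + (s x) ^ 3)) := nPsi.intg
      rw [hPhi, sub_sub, hPsi, ← integral_sub iPhi iPsi]
      rw [show (fun x => ((((r1 x) ^ 2 + (s1 x) ^ 2)
          + (ε/2) * ((r1 x) ^ 3 + (s1 x) ^ 3)
          - (ε/2) * ((r1 x) ^ 2 * s1 x + r1 x * (s1 x) ^ 2))
          - (((r x) ^ 2 + (s x) ^ 2) + (ε/2) * ((r x) ^ 3 + (s x) ^ 3))))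
          = fun x => ε * G x + ε ^ 2 * R x from hpoint]
      have iG : Integrable (fun x => ε * G x) := nG.intg.const_mul ε
      have iR : Integrable (fun x => ε ^ 2 * R x) := nR.intg.const_mul (ε ^ 2)
      rw [integral_add iG iR, integral_const_mul, integral_const_mul, hG0, mul_zero, zero_add]
    rw [key]
    -- final estimate
    have habs : |∫ x, R x| ≤ ∫ x, |R x| := by
      have h := norm_integral_le_integral_norm (μ := volume) R
      simp only [Real.norm_eq_abs] at h
      exact h
    have hint2 : ∫ x, |R x| ≤ 16 * M^5 * M := by
      have h1 : ∫ x, |R x| ≤ ∫ x, 16 * M^5 * u x := by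
        refine integral_mono nR.intg.abs (hu_int.const_mul _) fun x => ?_
        have := habsR x
        linarith only [this]
      rw [integral_const_mul] at h1
      have h2 : 16 * M^5 * ∫ x, u x ≤ 16 * M^5 * M := by
        refine mul_le_mul_of_nonneg_left hu_le ?_
        positivity
      linarith
    have hCval : (20 : ℝ) * (1 + max a 0 + max b 0) ^ 6 = 20 * M ^ 6 := by
      rw [max_eq_left ha0, max_eq_left hb0, ← hM_def]
    rw [abs_mul, abs_pow, abs_of_nonneg hε0]
    simp only [hCval]
    have hfin : |∫ x, R x| ≤ 20 * M ^ 6 := by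
      have : 16 * M^5 * M ≤ 20 * M^6 := by linarith only [pow_nonneg h0M 6]
      linarith only [habs, hint2, this]
    exact mul_le_mul_of_nonneg_left hfin (by positivity)
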